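/- Let J and L be finite index types. Let E : Matrix J L ℂ, let C and N be positive semidefinite Hermitian matrices in Matrix L L ℂ, and let Λ be a positive semidefinite Hermitian matrix in Matrix L L ℂ. For Q : Matrix L J ℂ define the real number f(Q) := Re (trace (Λ * (C − Q*E*C − (Q*E*C)ᴴ + Q*E*(C+N)*Eᴴ*Qᴴ))). If Q̂ : Matrix L J ℂ satisfies Q̂ * E * (C + N) * Eᴴ = C * Eᴴ, then f(Q̂) ≤ f(Q) for every Q : Matrix L J ℂ. -/

import Mathlib

open Matrix
open scoped ComplexOrder

lemma trace_re_nonneg_of_psd {L : Type*} [Fintype L] {A : Matrix L L ℂ}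
    (hA : A.PosSemidef) : 0 ≤ (Matrix.trace A).re := by
  classical
  rw [Matrix.trace]
  simp only [Complex.re_sum, Matrix.diag]
  refine Finset.sum_nonneg fun i _ => ?_
  have := hA.re_dotProduct_nonneg (Pi.single i 1)
  simpa [dotProduct, mulVec, Pi.single_apply, Finset.sum_ite_eq] using this

open scoped MatrixOrder in
lemma trace_mul_re_nonneg_of_psd {L : Type*} [Fintype L] [DecidableEq L]
    {A B : Matrix L L ℂ}
    (hA : A.PosSemidef) (hB : B.PosSemidef) : 0 ≤ (Matrix.trace (A * B)).re := by
  have h : A * B = A * ((CFC.sqrt B) * (CFC.sqrt B)) := by rw [CFC.sqrt_mul_sqrt_self B hB.nonneg]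
  have hs : (CFC.sqrt B).IsHermitian := (CFC.sqrt_nonneg B).posSemidef.isHermitian
  have h2 : Matrix.trace (A * B) = Matrix.trace ((CFC.sqrt B) * A * (CFC.sqrt B)) := by
    rw [h, ← Matrix.mul_assoc, Matrix.trace_mul_comm, ← Matrix.mul_assoc]
  rw [h2]
  have : ((CFC.sqrt B) * A * (CFC.sqrt B)).PosSemidef := by
    have := hA.conjTranspose_mul_mul_same (CFC.sqrt B)
    rwa [hs.eq] at this
  exact trace_re_nonneg_of_psd this

lemma key_identity {J L : Type*} [Fintype J] [Fintype L]
    (Q Qhat : Matrix L J ℂ) (E : Matrix J L ℂ) (M : Matrix J J ℂ) (C : Matrix L L ℂ)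
    (hC : Cᴴ = C) (hM : Mᴴ = M) (h1 : Qhat * M = C * Eᴴ) :
    C - Q * E * C - (Q * E * C)ᴴ + Q * M * Qᴴ =
      (C - Qhat * E * C - (Qhat * E * C)ᴴ + Qhat * M * Qhatᴴ)
        + (Q - Qhat) * M * (Q - Qhat)ᴴ := by
  have h2 : M * Qhatᴴ = E * C := by
    have := congrArg conjTranspose h1
    simpa [conjTranspose_mul, hC, hM] using this
  have hQEC : ∀ R : Matrix L J ℂ, R * E * C = R * (M * Qhatᴴ) := fun R => by
    rw [h2, Matrix.mul_assoc]
  have hQECH : ∀ R : Matrix L J ℂ, (R * E * C)ᴴ = Qhat * M * Rᴴ := fun R => by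
    rw [conjTranspose_mul, conjTranspose_mul, hC, ← Matrix.mul_assoc, ← h1]
  rw [hQECH Q, hQECH Qhat, hQEC Q, hQEC Qhat, conjTranspose_sub]
  simp only [Matrix.sub_mul, Matrix.mul_sub, Matrix.mul_assoc]
  abel

/-- Theorem 4.1 (sufficiency): with positive semidefinite Hermitian covariances `C`, `N`
and positive semidefinite Hermitian `Λ`, the expected squared `Λ`-norm error
`f(Q) = Re tr[Λ(C − QEC − (QEC)ᴴ + QE(C+N)EᴴQᴴ)]` is minimized by any `Q̂` with
`Q̂ E (C+N) Eᴴ = C Eᴴ`. -/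
theorem stmt_7 {J L : Type*} [Fintype J] [Fintype L]
    (E : Matrix J L ℂ) (C N Λ : Matrix L L ℂ)
    (hC : C.PosSemidef) (hN : N.PosSemidef) (hΛ : Λ.PosSemidef)
    (Qhat : Matrix L J ℂ)
    (hQhat : Qhat * E * (C + N) * Eᴴ = C * Eᴴ) :
    ∀ Q : Matrix L J ℂ,
      (Matrix.trace (Λ * (C - Qhat * E * C - (Qhat * E * C)ᴴ
          + Qhat * E * (C + N) * Eᴴ * Qhatᴴ))).re ≤
      (Matrix.trace (Λ * (C - Q * E * C - (Q * E * C)ᴴ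
          + Q * E * (C + N) * Eᴴ * Qᴴ))).re := by
  classical
  intro Q
  set M : Matrix J J ℂ := E * (C + N) * Eᴴ with hMdef
  have hMpsd : M.PosSemidef := (hC.add hN).mul_mul_conjTranspose_same E
  have hAssoc : ∀ R : Matrix L J ℂ, R * E * (C + N) * Eᴴ = R * M := fun R => by
    simp [hMdef, Matrix.mul_assoc]
  have h1 : Qhat * M = C * Eᴴ := by rw [← hAssoc]; exact hQhat
  have hid := key_identity Q Qhat E M C hC.isHermitian.eq hMpsd.isHermitian.eq h1
  rw [hAssoc Q, hAssoc Qhat]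
  conv_rhs => rw [hid, Matrix.mul_add, Matrix.trace_add]
  rw [Complex.add_re]
  have hpos : 0 ≤ (Matrix.trace (Λ * ((Q - Qhat) * M * (Q - Qhat)ᴴ))).re :=
    trace_mul_re_nonneg_of_psd hΛ (hMpsd.mul_mul_conjTranspose_same (Q - Qhat))
  linarith
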